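/- Σ_{n=1}^∞ e^{−πn²}(1 − 4πn²) = −1/2. -/

import Mathlib

open Real Complex


noncomputable def tdsS : ℝ := ∑' n : ℕ, rexp (-π * ((n:ℝ)+1)^2)
noncomputable def tdsT : ℝ := ∑' n : ℕ, ((n:ℝ)+1)^2 * rexp (-π * ((n:ℝ)+1)^2)

lemma tds_expbound (n : ℕ) : rexp (-π * ((n:ℝ)+1)^2) ≤ rexp (-π) ^ (n+1) := by
  rw [← Real.exp_nat_mul]
  apply Real.exp_le_exp.mpr
  have h1 : (1:ℝ) ≤ (n:ℝ)+1 := le_add_of_nonneg_left n.cast_nonneg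
  have h2 : ((n:ℝ)+1) ≤ ((n:ℝ)+1)^2 := by nlinarith
  push_cast
  nlinarith [pi_pos]

lemma tds_hSsum : HasSum (fun n : ℕ => rexp (-π * ((n:ℝ)+1)^2)) tdsS := by
  refine (Summable.hasSum ?_)
  refine Summable.of_nonneg_of_le (fun n => (exp_pos _).le) tds_expbound ?_
  exact ((summable_geometric_of_lt_one (exp_pos _).le
      (exp_lt_one_iff.mpr (neg_lt_zero.mpr pi_pos))).comp_injective (add_left_injective 1))

lemma tds_hTsum : HasSum (fun n : ℕ => ((n:ℝ)+1)^2 * rexp (-π * ((n:ℝ)+1)^2)) tdsT := by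
  refine (Summable.hasSum ?_)
  have hgeo : Summable (fun n : ℕ => (n:ℝ)^2 * rexp (-π) ^ n) := by
    apply summable_pow_mul_geometric_of_norm_lt_one 2
    rw [Real.norm_eq_abs, abs_of_pos (exp_pos _)]
    exact exp_lt_one_iff.mpr (neg_lt_zero.mpr pi_pos)
  have h2 : Summable (fun n : ℕ => ((n:ℝ)+1)^2 * rexp (-π) ^ (n+1)) := by
    refine (hgeo.comp_injective (add_left_injective 1)).congr fun n => ?_
    simp only [Function.comp]
    push_cast
    ring
  refine Summable.of_nonneg_of_le (fun n => by positivity) (fun n => ?_) h2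
  exact mul_le_mul_of_nonneg_left (tds_expbound n) (by positivity)

lemma tds_hAZ : HasSum (fun n : ℤ => rexp (-π * (n:ℝ)^2)) (1 + 2*tdsS) := by
  have h1 : HasSum (fun n : ℕ => rexp (-π * (((n:ℤ)+1 : ℤ):ℝ)^2)) tdsS :=
    tds_hSsum.congr_fun fun n => by push_cast; ring_nf
  have h2 : HasSum (fun n : ℕ => rexp (-π * ((n:ℤ):ℝ)^2)) (tdsS + 1) := by
    have := (hasSum_nat_add_iff (f := fun n : ℕ => rexp (-π * (n:ℝ)^2)) 1).mp
      (h1.congr_fun fun n => by push_cast; ring_nf)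
    simpa using this
  have h3 : HasSum (fun n : ℕ => rexp (-π * ((-((n:ℤ)+1) : ℤ):ℝ)^2)) tdsS :=
    h1.congr_fun fun n => by push_cast; ring_nf
  have h4 := HasSum.of_nat_of_neg_add_one
    (f := fun k : ℤ => rexp (-π * (k:ℝ)^2)) h2 h3
  convert h4 using 1
  ring

lemma tds_hBZ : HasSum (fun n : ℤ => (n:ℝ)^2 * rexp (-π * (n:ℝ)^2)) (2*tdsT) := by
  have h1 : HasSum (fun n : ℕ => ((((n:ℤ)+1 : ℤ)):ℝ)^2 * rexp (-π * (((n:ℤ)+1 : ℤ):ℝ)^2)) tdsT :=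
    tds_hTsum.congr_fun fun n => by push_cast; ring_nf
  have h2 : HasSum (fun n : ℕ => ((n:ℤ):ℝ)^2 * rexp (-π * ((n:ℤ):ℝ)^2)) (tdsT + 0) := by
    have := (hasSum_nat_add_iff (f := fun n : ℕ => (n:ℝ)^2 * rexp (-π * (n:ℝ)^2)) 1).mp
      (h1.congr_fun fun n => by push_cast; ring_nf)
    simpa using this
  have h3 : HasSum (fun n : ℕ => ((-((n:ℤ)+1) : ℤ):ℝ)^2 * rexp (-π * ((-((n:ℤ)+1) : ℤ):ℝ)^2)) tdsT :=
    h1.congr_fun fun n => by push_cast; ring_nf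
  have h4 := HasSum.of_nat_of_neg_add_one
    (f := fun k : ℤ => (k:ℝ)^2 * rexp (-π * (k:ℝ)^2)) h2 h3
  convert h4 using 1
  ring

lemma tds_hI : (0:ℝ) < Complex.im Complex.I := by simp

lemma tds_arg_eq (n : ℤ) : (2*(π:ℂ)*Complex.I*(n:ℂ)*0 + (π:ℂ)*Complex.I*(n:ℂ)^2*Complex.I)
    = ((-π * (n:ℝ)^2 : ℝ) : ℂ) := by
  push_cast
  ring_nf
  rw [Complex.I_sq]
  ring

lemma tds_term_eq (n : ℤ) : jacobiTheta₂_term n 0 Complex.I = ((rexp (-π * (n:ℝ)^2) : ℝ) : ℂ) := by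
  rw [jacobiTheta₂_term, tds_arg_eq, Complex.ofReal_exp]

lemma tds_hGval : jacobiTheta₂ 0 Complex.I = ((1 + 2*tdsS : ℝ) : ℂ) := by
  have hz := hasSum_jacobiTheta₂_term 0 tds_hI
  have hc : HasSum (fun n : ℤ => ((rexp (-π*(n:ℝ)^2) : ℝ) : ℂ)) ((1 + 2*tdsS : ℝ) : ℂ) :=
    Complex.hasSum_ofReal.mpr tds_hAZ
  exact hz.unique (hc.congr_fun tds_term_eq)

lemma tds_hCsum : HasSum (fun n : ℤ => (jacobiTheta₂_term_fderiv n 0 Complex.I) (0,1))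
    ((jacobiTheta₂_fderiv 0 Complex.I) (0,1)) :=
  (hasSum_jacobiTheta₂_term_fderiv 0 tds_hI).mapL (ContinuousLinearMap.apply ℂ ℂ ((0:ℂ),(1:ℂ)))

lemma tds_term_fderiv_eq (n : ℤ) : (jacobiTheta₂_term_fderiv n 0 Complex.I) (0,1)
    = (π : ℂ) * Complex.I * (((n:ℝ)^2 * rexp (-π * (n:ℝ)^2) : ℝ) : ℂ) := by
  rw [jacobiTheta₂_term_fderiv]
  simp only [ContinuousLinearMap.smul_apply, ContinuousLinearMap.add_apply,
    ContinuousLinearMap.coe_fst', ContinuousLinearMap.coe_snd', smul_eq_mul]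
  rw [tds_arg_eq, ← Complex.ofReal_exp]
  push_cast
  ring

lemma tds_hCval : (jacobiTheta₂_fderiv 0 Complex.I) (0,1)
    = (π : ℂ) * Complex.I * ((2*tdsT : ℝ) : ℂ) := by
  have h2 : HasSum (fun n : ℤ => (π : ℂ) * Complex.I * (((n:ℝ)^2 * rexp (-π * (n:ℝ)^2) : ℝ) : ℂ))
      ((π : ℂ) * Complex.I * ((2*tdsT : ℝ) : ℂ)) :=
    (Complex.hasSum_ofReal.mpr tds_hBZ).mul_left _
  exact tds_hCsum.unique (h2.congr_fun tds_term_fderiv_eq)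

lemma tds_hG_deriv : HasDerivAt (fun τ => jacobiTheta₂ 0 τ)
    ((jacobiTheta₂_fderiv 0 Complex.I) (0,1)) Complex.I :=
  (hasFDerivAt_jacobiTheta₂ 0 tds_hI).comp_hasDerivAt Complex.I
    (HasDerivAt.prodMk (hasDerivAt_const Complex.I (0:ℂ)) (hasDerivAt_id Complex.I))

lemma tds_funeq : (fun τ : ℂ => jacobiTheta₂ 0 τ)
    = fun τ : ℂ => ((-Complex.I*τ)^(1/2:ℂ))⁻¹ * jacobiTheta₂ 0 (-1/τ) := by
  funext τ
  rw [jacobiTheta₂_functional_equation 0 τ]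
  simp

lemma tds_hneg : (-1/Complex.I : ℂ) = Complex.I := by
  rw [div_I]
  ring

lemma tds_hu : HasDerivAt (fun τ : ℂ => -1/τ) (-1 : ℂ) Complex.I := by
  have h := (hasDerivAt_inv Complex.I_ne_zero).neg
  have he : (fun τ : ℂ => -1/τ) = fun τ : ℂ => -τ⁻¹ := funext fun τ => by rw [neg_div, one_div]
  rw [he]
  refine h.congr_deriv ?_
  rw [Complex.I_sq]
  norm_num

lemma tds_hGu : HasDerivAt (fun τ : ℂ => jacobiTheta₂ 0 (-1/τ))
    ((jacobiTheta₂_fderiv 0 Complex.I) (0,1) * (-1)) Complex.I := by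
  have hGc : HasDerivAt (fun τ => jacobiTheta₂ 0 τ)
      ((jacobiTheta₂_fderiv 0 Complex.I) (0,1)) (-1/Complex.I) := by rw [tds_hneg]; exact tds_hG_deriv
  exact hGc.comp Complex.I tds_hu

lemma tds_hb : HasDerivAt (fun τ : ℂ => ((-Complex.I*τ)^(1/2:ℂ))⁻¹) (Complex.I/2) Complex.I := by
  have hin : HasDerivAt (fun τ : ℂ => -Complex.I*τ) (-Complex.I) Complex.I := by
    simpa using (hasDerivAt_id Complex.I).const_mul (-Complex.I)
  have hmem : (-Complex.I*Complex.I) ∈ Complex.slitPlane := by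
    rw [neg_mul, Complex.I_mul_I, neg_neg]
    exact Complex.one_mem_slitPlane
  have ha := hin.cpow_const (c := (1/2:ℂ)) hmem
  have hne : ((-Complex.I*Complex.I) : ℂ)^(1/2:ℂ) ≠ 0 := by
    rw [neg_mul, Complex.I_mul_I, neg_neg, Complex.one_cpow]
    exact one_ne_zero
  have := ha.inv hne
  refine this.congr_deriv ?_
  rw [neg_mul, Complex.I_mul_I, neg_neg, Complex.one_cpow, Complex.one_cpow]
  norm_num
  ring

lemma tds_key : (jacobiTheta₂_fderiv 0 Complex.I) (0,1)
    = Complex.I/4 * jacobiTheta₂ 0 Complex.I := by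
  have hH : HasDerivAt (fun τ : ℂ => ((-Complex.I*τ)^(1/2:ℂ))⁻¹ * jacobiTheta₂ 0 (-1/τ))
      (Complex.I/2 * jacobiTheta₂ 0 (-1/Complex.I)
        + ((-Complex.I*Complex.I)^(1/2:ℂ))⁻¹ * ((jacobiTheta₂_fderiv 0 Complex.I) (0,1) * (-1)))
      Complex.I := tds_hb.mul tds_hGu
  have h1 : HasDerivAt (fun τ => jacobiTheta₂ 0 τ)
      (Complex.I/2 * jacobiTheta₂ 0 (-1/Complex.I)
        + ((-Complex.I*Complex.I)^(1/2:ℂ))⁻¹ * ((jacobiTheta₂_fderiv 0 Complex.I) (0,1) * (-1)))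
      Complex.I := by
    rw [tds_funeq]; exact hH
  have h2 := tds_hG_deriv.unique h1
  rw [tds_hneg, neg_mul, Complex.I_mul_I, neg_neg, Complex.one_cpow, inv_one] at h2
  linear_combination (1/2 : ℂ) * h2

lemma tds_hreal : (2*π*tdsT : ℝ) = (1+2*tdsS)/4 := by
  have hc := tds_hCval
  rw [tds_key, tds_hGval] at hc
  have h4 : ((2*π*tdsT : ℝ) : ℂ) * Complex.I = (((1+2*tdsS)/4 : ℝ) : ℂ) * Complex.I := by
    push_cast at hc ⊢
    linear_combination -hc
  exact_mod_cast mul_right_cancel₀ Complex.I_ne_zero h4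

/-- `Σ_{n=1}^∞ e^{−πn²}(1 − 4πn²) = −1/2`. -/
theorem theta_deriv_sum :
    (∑' n : ℕ+, Real.exp (-(π * (n : ℝ) ^ 2)) * (1 - 4 * π * (n : ℝ) ^ 2)) = -1 / 2 := by
  rw [← Equiv.pnatEquivNat.symm.tsum_eq]
  have hsum : HasSum (fun n : ℕ => rexp (-(π * (((Equiv.pnatEquivNat.symm n : ℕ+)) : ℝ) ^ 2))
      * (1 - 4 * π * (((Equiv.pnatEquivNat.symm n : ℕ+)) : ℝ) ^ 2)) (tdsS - 4*π*tdsT) := by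
    refine (tds_hSsum.sub (tds_hTsum.mul_left (4*π))).congr_fun fun n => ?_
    have hcoe : (((Equiv.pnatEquivNat.symm n : ℕ+)) : ℝ) = (n:ℝ)+1 := by
      have h : ((Equiv.pnatEquivNat.symm n : ℕ+) : ℕ) = n+1 := rfl
      exact_mod_cast congrArg (Nat.cast : ℕ → ℝ) h
    rw [hcoe]
    ring_nf
  rw [hsum.tsum_eq]
  have := tds_hreal
  linarith
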